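/- In the adaptive LDR-KL loss, the inner maximization over p yields: ψ(x, y) = max_{λ ≥ 0} [ λ · log((1/K) ∑_k exp((f_k + c_{k,y} − f_y)/λ)) − (α/2)(λ − λ₀)² ], and at any stationary point with λ* > 0 one has KL(p*, 1/K) + α(λ* − λ₀) = 0, i.e., λ* = λ₀ − (1/α)·KL(p*, 1/K), where p*_k ∝ exp((f_k + c_{k,y} − f_y)/λ*). -/

import Mathlib

/-- Adaptive LDR-KL: the inner maximization over the simplex gives the closed form
`g(λ) = λ log((1/K) ∑ exp(q_k/λ))` (so ψ = max over λ ≥ 0 of `g(λ) − (α/2)(λ−λ₀)²`), and at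
any stationary point λ* > 0 of the outer objective one has
`KL(p*, 1/K) + α(λ* − λ₀) = 0` with `p*_k ∝ exp(q_k/λ*)`. -/
theorem aldr_kl_inner_and_stationarity (K : ℕ) (hK : 0 < K)
    (f : Fin K → ℝ) (y : Fin K) (c : Fin K → ℝ) (hc : ∀ k, 0 ≤ c k) (hcy : c y = 0)
    (α lam0 : ℝ) (hα : 0 < α) (hlam0 : 0 < lam0)
    (q : Fin K → ℝ) (hq : q = fun k => f k + c k - f y) :
    (∀ lam : ℝ, 0 < lam →
      IsGreatest
        {v : ℝ | ∃ p : Fin K → ℝ, (∀ k, 0 ≤ p k) ∧ (∑ k : Fin K, p k = 1) ∧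
          v = (∑ k : Fin K, p k * q k) - lam * ∑ k : Fin K, p k * Real.log ((K : ℝ) * p k)}
        (lam * Real.log ((1 / (K : ℝ)) * ∑ k : Fin K, Real.exp (q k / lam)))) ∧
    (∀ lamstar : ℝ, 0 < lamstar →
      HasDerivAt
        (fun l : ℝ => l * Real.log ((1 / (K : ℝ)) * ∑ k : Fin K, Real.exp (q k / l))
          - α / 2 * (l - lam0) ^ 2) 0 lamstar →
      ∀ pstar : Fin K → ℝ,
        (pstar = fun k => Real.exp (q k / lamstar) / ∑ j : Fin K, Real.exp (q j / lamstar)) →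
        (∑ k : Fin K, pstar k * Real.log ((K : ℝ) * pstar k)) + α * (lamstar - lam0) = 0) := by
  have hKR : (0:ℝ) < K := Nat.cast_pos.mpr hK
  constructor
  · -- Part 1: inner maximization
    intro lam hlam
    have hSpos : 0 < ∑ k : Fin K, Real.exp (q k / lam) :=
      Finset.sum_pos (fun k _ => Real.exp_pos _) ⟨y, Finset.mem_univ y⟩
    set S : ℝ := ∑ k : Fin K, Real.exp (q k / lam) with hSdef
    have hSne : S ≠ 0 := ne_of_gt hSpos
    have hLog : Real.log ((1 / (K:ℝ)) * S) = Real.log S - Real.log (K:ℝ) := by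
      rw [one_div, Real.log_mul (by positivity) hSne, Real.log_inv]; ring
    have hsum1 : ∑ k : Fin K, Real.exp (q k / lam) / S = 1 := by
      rw [← Finset.sum_div, ← hSdef, div_self hSne]
    constructor
    · -- membership: the Gibbs distribution attains the value
      refine ⟨fun k => Real.exp (q k / lam) / S, fun k => by positivity, hsum1, ?_⟩
      have hterm : ∀ k : Fin K,
          (Real.exp (q k / lam) / S) * Real.log ((K:ℝ) * (Real.exp (q k / lam) / S))
          = (Real.exp (q k / lam) / S) * (q k / lam)
            + (Real.exp (q k / lam) / S) * (Real.log (K:ℝ) - Real.log S) := by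
        intro k
        rw [Real.log_mul (ne_of_gt hKR) (by positivity),
          Real.log_div (Real.exp_ne_zero _) hSne, Real.log_exp]
        ring
      have hplog : ∑ k : Fin K,
            (Real.exp (q k / lam) / S) * Real.log ((K:ℝ) * (Real.exp (q k / lam) / S))
          = (∑ k : Fin K, (Real.exp (q k / lam) / S) * q k) / lam
            + (Real.log (K:ℝ) - Real.log S) := by
        rw [Finset.sum_congr rfl fun k _ => hterm k, Finset.sum_add_distrib,
          ← Finset.sum_mul, hsum1, one_mul, Finset.sum_div]
        congr 1
        exact Finset.sum_congr rfl fun k _ => by ring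
      rw [hplog, hLog]
      field_simp
      ring
    · -- upper bound
      rintro v ⟨p, hp0, hp1, rfl⟩
      have hpt : ∀ k ∈ Finset.univ, p k * (q k / lam) - p k * Real.log ((K:ℝ) * p k)
          ≤ Real.exp (q k / lam) / S - p k + p k * (Real.log S - Real.log (K:ℝ)) := by
        intro k _
        rcases (hp0 k).eq_or_lt with h | h
        · rw [← h]; simp; positivity
        · have hx : 0 < Real.exp (q k / lam) / (p k * S) := by positivity
          have hle := Real.log_le_sub_one_of_pos hx
          rw [Real.log_div (Real.exp_ne_zero _) (by positivity), Real.log_exp,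
            Real.log_mul (ne_of_gt h) hSne] at hle
          have hmul := mul_le_mul_of_nonneg_left hle h.le
          have h1 : p k * (Real.exp (q k / lam) / (p k * S)) = Real.exp (q k / lam) / S := by
            field_simp
          rw [Real.log_mul (ne_of_gt hKR) (ne_of_gt h)]
          nlinarith [hmul, h1]
      have hsum := Finset.sum_le_sum hpt
      have hL : ∑ k : Fin K, (p k * (q k / lam) - p k * Real.log ((K:ℝ) * p k))
          = (∑ k : Fin K, p k * q k) / lam - ∑ k : Fin K, p k * Real.log ((K:ℝ) * p k) := by
        rw [Finset.sum_sub_distrib, Finset.sum_div]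
        congr 1
        exact Finset.sum_congr rfl fun k _ => by ring
      have hR : ∑ k : Fin K, (Real.exp (q k / lam) / S - p k
            + p k * (Real.log S - Real.log (K:ℝ)))
          = Real.log S - Real.log (K:ℝ) := by
        rw [Finset.sum_add_distrib, Finset.sum_sub_distrib, hsum1, hp1,
          ← Finset.sum_mul, hp1, one_mul]
        ring
      rw [hL, hR] at hsum
      have hid : lam * ((∑ k : Fin K, p k * q k) / lam) = ∑ k : Fin K, p k * q k := by
        field_simp
      have hmul2 := mul_le_mul_of_nonneg_left hsum hlam.le
      rw [mul_sub, hid] at hmul2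
      rw [hLog]
      linarith
  · -- Part 2: stationarity
    intro l hl hstat pstar hpstar
    have hlne : l ≠ 0 := ne_of_gt hl
    have hSpos : 0 < ∑ k : Fin K, Real.exp (q k / l) :=
      Finset.sum_pos (fun k _ => Real.exp_pos _) ⟨y, Finset.mem_univ y⟩
    set S : ℝ := ∑ k : Fin K, Real.exp (q k / l) with hSdef
    have hSne : S ≠ 0 := ne_of_gt hSpos
    have hLog : Real.log ((1 / (K:ℝ)) * S) = Real.log S - Real.log (K:ℝ) := by
      rw [one_div, Real.log_mul (by positivity) hSne, Real.log_inv]; ring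
    have hsum1 : ∑ k : Fin K, Real.exp (q k / l) / S = 1 := by
      rw [← Finset.sum_div, ← hSdef, div_self hSne]
    -- derivative of the sum of exponentials
    have hS1 : HasDerivAt (fun x : ℝ => ∑ k : Fin K, Real.exp (q k / x))
        (∑ k : Fin K, Real.exp (q k / l) * (-(q k) / l ^ 2)) l := by
      apply HasDerivAt.fun_sum
      intro k _
      have h1 : HasDerivAt (fun x : ℝ => q k / x) (-(q k) / l ^ 2) l := by
        have := (hasDerivAt_const l (q k)).fun_div (hasDerivAt_id l) hlne
        simpa using this
      exact h1.exp
    have hSKne : (1 / (K:ℝ)) * S ≠ 0 := by positivity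
    have hlog : HasDerivAt
        (fun x : ℝ => Real.log ((1/(K:ℝ)) * ∑ k : Fin K, Real.exp (q k / x)))
        (((1/(K:ℝ)) * ∑ k : Fin K, Real.exp (q k / l) * (-(q k) / l ^ 2))
          / ((1/(K:ℝ)) * S)) l :=
      (hS1.const_mul (1/(K:ℝ))).log hSKne
    have hmul : HasDerivAt
        (fun x : ℝ => x * Real.log ((1/(K:ℝ)) * ∑ k : Fin K, Real.exp (q k / x)))
        (1 * Real.log ((1/(K:ℝ)) * S)
          + l * (((1/(K:ℝ)) * ∑ k : Fin K, Real.exp (q k / l) * (-(q k) / l ^ 2))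
            / ((1/(K:ℝ)) * S))) l :=
      (hasDerivAt_id l).mul hlog
    have hsq : HasDerivAt (fun x : ℝ => α / 2 * (x - lam0) ^ 2) (α * (l - lam0)) l := by
      have h2 := HasDerivAt.const_mul (α/2) (((hasDerivAt_id l).sub_const lam0).fun_pow 2)
      refine h2.congr_deriv ?_
      simp only [id_eq]
      push_cast
      ring
    have htot := hmul.sub hsq
    have hzero := htot.unique hstat
    have hfrac : ((1/(K:ℝ)) * ∑ k : Fin K, Real.exp (q k / l) * (-(q k) / l ^ 2))
        / ((1/(K:ℝ)) * S) = (∑ k : Fin K, Real.exp (q k / l) * (-(q k) / l ^ 2)) / S := by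
      rw [mul_div_mul_left _ _ (by positivity : (1/(K:ℝ)) ≠ 0)]
    rw [hfrac] at hzero
    have hlD : l * ((∑ k : Fin K, Real.exp (q k / l) * (-(q k) / l ^ 2)) / S)
        = ∑ k : Fin K, -((Real.exp (q k / l) / S) * (q k / l)) := by
      rw [Finset.sum_div, Finset.mul_sum]
      refine Finset.sum_congr rfl fun k _ => ?_
      field_simp
    rw [hlD] at hzero
    subst hpstar
    have hterm : ∀ k : Fin K,
        (Real.exp (q k / l) / S) * Real.log ((K:ℝ) * (Real.exp (q k / l) / S))
        = (Real.exp (q k / l) / S) * (q k / l)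
          + (Real.exp (q k / l) / S) * (Real.log (K:ℝ) - Real.log S) := by
      intro k
      rw [Real.log_mul (ne_of_gt hKR) (by positivity),
        Real.log_div (Real.exp_ne_zero _) hSne, Real.log_exp]
      ring
    have hplog : ∑ k : Fin K,
          (Real.exp (q k / l) / S) * Real.log ((K:ℝ) * (Real.exp (q k / l) / S))
        = (∑ k : Fin K, (Real.exp (q k / l) / S) * (q k / l))
          + (Real.log (K:ℝ) - Real.log S) := by
      rw [Finset.sum_congr rfl fun k _ => hterm k, Finset.sum_add_distrib,
        ← Finset.sum_mul, hsum1, one_mul]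
    have hnegsum : ∑ k : Fin K, -((Real.exp (q k / l) / S) * (q k / l))
        = -∑ k : Fin K, (Real.exp (q k / l) / S) * (q k / l) := by
      rw [Finset.sum_neg_distrib]
    rw [hnegsum] at hzero
    simp only [hSdef] at hplog ⊢
    rw [hplog]
    rw [hLog] at hzero
    linarith
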